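/- Let ρ be a d×d complex positive semidefinite matrix with trace 1, let 0 < α < 1, and let Φ_1, …, Φ_N (N ≥ 2) be quantum channels, where Φ_s has Kraus operators K^s_1, …, K^s_n (d×d complex matrices with ∑_{i=1}^n (K^s_i)† K^s_i = I). Then for all permutations π_1, …, π_N of {1, …, n}: ∑_{s=1}^N I^α_ρ(Φ_s) ≥ (1/N) · [ ∑_{i=1}^n I^α_ρ(∑_{s=1}^N K^s_{π_s(i)}) + (2/(N(N − 1))) · (∑_{1 ≤ s < t ≤ N} √(∑_{i=1}^n I^α_ρ(K^s_{π_s(i)} − K^t_{π_t(i)})))² ], where √ denotes the real square root. -/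

import Mathlib

open Matrix Finset
open scoped ComplexOrder

/-- `ρ^α` via the continuous functional calculus applied to `t ↦ t ^ α`. -/
noncomputable def mpow {d : ℕ} (ρ : Matrix (Fin d) (Fin d) ℂ) (α : ℝ) :
    Matrix (Fin d) (Fin d) ℂ :=
  cfc (fun t : ℝ => t ^ α) ρ

/-- The Wigner–Yanase–Dyson skew information
`I^α_ρ(K) = −(1/2) Tr([ρ^α, K†] [ρ^{1−α}, K])` of an arbitrary matrix `K`. -/
noncomputable def wyd {d : ℕ} (ρ : Matrix (Fin d) (Fin d) ℂ) (α : ℝ)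
    (K : Matrix (Fin d) (Fin d) ℂ) : ℝ :=
  (-(1 / 2 : ℂ) *
    ((mpow ρ α * Kᴴ - Kᴴ * mpow ρ α) * (mpow ρ (1 - α) * K - K * mpow ρ (1 - α))).trace).re

lemma pair_split {N : ℕ} (F : Fin N → Fin N → ℝ) (hsymm : ∀ s t, F s t = F t s)
    (hdiag : ∀ s, F s s = 0) :
    ∑ s, ∑ t, F s t =
      2 * ∑ p ∈ univ.filter (fun p : Fin N × Fin N => p.1 < p.2), F p.1 p.2 := by
  have key : ∀ a b : Fin N,
      F a b = (if a < b then F a b else 0) + (if b < a then F a b else 0) := by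
    intro a b
    rcases lt_trichotomy a b with h | h | h
    · simp [h, asymm h]
    · subst h; simp [hdiag]
    · simp [h, asymm h, not_lt_of_gt h]
  have hswap : ∑ p : Fin N × Fin N, (if p.2 < p.1 then F p.1 p.2 else 0)
      = ∑ p : Fin N × Fin N, (if p.1 < p.2 then F p.1 p.2 else 0) := by
    rw [← Equiv.sum_comp (Equiv.prodComm (Fin N) (Fin N))
      (fun p : Fin N × Fin N => if p.2 < p.1 then F p.1 p.2 else 0)]
    refine Finset.sum_congr rfl fun p _ => ?_
    simp only [Equiv.prodComm_apply, Prod.swap_prod_mk, Prod.fst_swap, Prod.snd_swap]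
    by_cases h : p.1 < p.2 <;> simp [h, hsymm]
  calc ∑ s, ∑ t, F s t = ∑ p : Fin N × Fin N, F p.1 p.2 := by
        rw [Fintype.sum_prod_type]
    _ = ∑ p : Fin N × Fin N,
        ((if p.1 < p.2 then F p.1 p.2 else 0) + (if p.2 < p.1 then F p.1 p.2 else 0)) := by
        exact Finset.sum_congr rfl fun p _ => key p.1 p.2
    _ = 2 * ∑ p ∈ univ.filter (fun p : Fin N × Fin N => p.1 < p.2), F p.1 p.2 := by
        rw [Finset.sum_add_distrib, hswap, ← Finset.sum_filter, two_mul]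

lemma pair_card (N : ℕ) :
    2 * (((univ.filter (fun p : Fin N × Fin N => p.1 < p.2)).card : ℝ))
      = (N : ℝ) * ((N : ℝ) - 1) := by
  have := pair_split (fun s t : Fin N => if s = t then 0 else 1)
    (fun s t => by by_cases h : s = t <;> simp [h, eq_comm]) (fun s => by simp)
  have hL : ∑ s : Fin N, ∑ t : Fin N, (if s = t then (0:ℝ) else 1)
      = (N : ℝ) * ((N : ℝ) - 1) := by
    have h1 : ∀ s : Fin N, ∑ t : Fin N, (if s = t then (0:ℝ) else 1) = (N : ℝ) - 1 := by
      intro s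
      have : ∀ t : Fin N, (if s = t then (0:ℝ) else 1) = 1 - (if s = t then 1 else 0) := by
        intro t; by_cases h : s = t <;> simp [h]
      rw [Finset.sum_congr rfl fun t _ => this t, Finset.sum_sub_distrib,
        Finset.sum_ite_eq univ s (fun _ => (1:ℝ))]
      simp
    rw [Finset.sum_congr rfl fun s _ => h1 s, Finset.sum_const, Finset.card_univ,
      Fintype.card_fin, nsmul_eq_mul]
  rw [hL] at this
  have hR : ∑ p ∈ univ.filter (fun p : Fin N × Fin N => p.1 < p.2),
      (if p.1 = p.2 then (0:ℝ) else 1)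
      = ((univ.filter (fun p : Fin N × Fin N => p.1 < p.2)).card : ℝ) := by
    rw [Finset.sum_congr rfl (fun p hp => ?_), Finset.sum_const, nsmul_eq_mul, mul_one]
    rw [if_neg (ne_of_lt (Finset.mem_filter.mp hp).2)]
  rw [hR] at this
  linarith

lemma scalar_id {N : ℕ} (z : Fin N → ℂ) :
    Complex.normSq (∑ s, z s)
      + ∑ p ∈ univ.filter (fun p : Fin N × Fin N => p.1 < p.2),
          Complex.normSq (z p.1 - z p.2)
      = (N : ℝ) * ∑ s, Complex.normSq (z s) := by
  have h2 : ∑ s, ∑ t, Complex.normSq (z s - z t)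
      = 2 * ∑ p ∈ univ.filter (fun p : Fin N × Fin N => p.1 < p.2),
          Complex.normSq (z p.1 - z p.2) := by
    refine pair_split _ (fun s t => ?_) (fun s => by simp)
    rw [← Complex.normSq_neg, neg_sub]
  have hfull : ∑ s, ∑ t, Complex.normSq (z s - z t)
      = 2 * (N : ℝ) * ∑ s, Complex.normSq (z s) - 2 * Complex.normSq (∑ s, z s) := by
    have hns : Complex.normSq (∑ s, z s)
        = ∑ s, ∑ t, (z s * (starRingEnd ℂ) (z t)).re := by
      have : (∑ s, z s) * (starRingEnd ℂ) (∑ s, z s)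
          = ∑ s, ∑ t, z s * (starRingEnd ℂ) (z t) := by
        rw [map_sum, Finset.sum_mul_sum]
      have h := congrArg Complex.re this
      rw [Complex.mul_conj, Complex.ofReal_re] at h
      rw [h, Complex.re_sum]
      exact Finset.sum_congr rfl fun s _ => (Complex.re_sum _ _)
    simp_rw [Complex.normSq_sub]
    rw [Finset.sum_congr rfl (fun s (_ : s ∈ univ) => Finset.sum_sub_distrib _ _),
        Finset.sum_sub_distrib]
    rw [Finset.sum_congr rfl (fun s (_ : s ∈ univ) => Finset.sum_add_distrib),
        Finset.sum_add_distrib]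
    simp only [Finset.sum_const, Finset.card_univ, Fintype.card_fin, nsmul_eq_mul,
      ← Finset.mul_sum, ← Finset.sum_mul]
    rw [hns]
    push_cast
    ring_nf
  linarith [h2, hfull]


lemma conj_mul_conj {d : ℕ} {V : Matrix (Fin d) (Fin d) ℂ} (h2 : star V * V = 1)
    (A B : Matrix (Fin d) (Fin d) ℂ) :
    (V * A * star V) * (V * B * star V) = V * (A * B) * star V := by
  simp only [Matrix.mul_assoc]
  rw [← Matrix.mul_assoc (star V) V (B * star V), h2, Matrix.one_mul]

lemma diag_comm_trace {d : ℕ} (a b : Fin d → ℂ) (P Q : Matrix (Fin d) (Fin d) ℂ) :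
    ((diagonal a * P - P * diagonal a) * (diagonal b * Q - Q * diagonal b)).trace
      = ∑ j, ∑ k, (a j - a k) * (b k - b j) * (P j k * Q k j) := by
  simp only [Matrix.trace, Matrix.diag, Matrix.mul_apply, Matrix.sub_apply,
    Matrix.diagonal_apply, ite_mul, mul_ite, zero_mul, mul_zero,
    Finset.sum_ite_eq, Finset.sum_ite_eq', Finset.mem_univ, if_true,
    Finset.sum_sub_distrib]
  refine Finset.sum_congr rfl fun j _ => Finset.sum_congr rfl fun k _ => ?_
  ring

section master
variable {d : ℕ} {ρ : Matrix (Fin d) (Fin d) ℂ} (hρ : ρ.IsHermitian) (α : ℝ)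

lemma mpow_eq (β : ℝ) :
    mpow ρ β = (hρ.eigenvectorUnitary : Matrix (Fin d) (Fin d) ℂ) *
      diagonal (fun i => ((hρ.eigenvalues i ^ β : ℝ) : ℂ)) *
      star (hρ.eigenvectorUnitary : Matrix (Fin d) (Fin d) ℂ) := by
  rw [mpow, hρ.cfc_eq]
  rfl

lemma wyd_eq (K : Matrix (Fin d) (Fin d) ℂ) :
    wyd ρ α K = ∑ j, ∑ k,
      (1/2) * ((hρ.eigenvalues j ^ α - hρ.eigenvalues k ^ α) *
        (hρ.eigenvalues j ^ (1-α) - hρ.eigenvalues k ^ (1-α))) *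
      Complex.normSq ((star (hρ.eigenvectorUnitary : Matrix (Fin d) (Fin d) ℂ) * K *
        (hρ.eigenvectorUnitary : Matrix (Fin d) (Fin d) ℂ)) k j) := by
  set V : Matrix (Fin d) (Fin d) ℂ := (hρ.eigenvectorUnitary : Matrix (Fin d) (Fin d) ℂ) with hV
  have h1 : V * star V = 1 := Matrix.mem_unitaryGroup_iff.mp hρ.eigenvectorUnitary.2
  have h2 : star V * V = 1 := Matrix.mem_unitaryGroup_iff'.mp hρ.eigenvectorUnitary.2
  set M : Matrix (Fin d) (Fin d) ℂ := star V * K * V with hM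
  set a : Fin d → ℂ := fun i => ((hρ.eigenvalues i ^ α : ℝ) : ℂ) with ha
  set b : Fin d → ℂ := fun i => ((hρ.eigenvalues i ^ (1-α) : ℝ) : ℂ) with hb
  have hKM : K = V * M * star V := by
    rw [hM]
    rw [show V * (star V * K * V) * star V = (V * star V) * K * (V * star V) from by
      simp only [Matrix.mul_assoc]]
    rw [h1, Matrix.one_mul, Matrix.mul_one]
  have hKMH : Kᴴ = V * Mᴴ * star V := by
    conv_lhs => rw [hKM]
    simp only [Matrix.conjTranspose_mul, Matrix.star_eq_conjTranspose,
      Matrix.conjTranspose_conjTranspose, Matrix.mul_assoc]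
  have hmα : mpow ρ α = V * diagonal a * star V := mpow_eq hρ α
  have hmβ : mpow ρ (1-α) = V * diagonal b * star V := mpow_eq hρ (1-α)
  have e1 : mpow ρ α * Kᴴ - Kᴴ * mpow ρ α
      = V * (diagonal a * Mᴴ - Mᴴ * diagonal a) * star V := by
    rw [hmα, hKMH, conj_mul_conj h2, conj_mul_conj h2, Matrix.mul_sub, Matrix.sub_mul]
  have e2 : mpow ρ (1-α) * K - K * mpow ρ (1-α)
      = V * (diagonal b * M - M * diagonal b) * star V := by
    conv_lhs => rw [hmβ, hKM]
    rw [conj_mul_conj h2, conj_mul_conj h2, Matrix.mul_sub, Matrix.sub_mul]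
  rw [wyd, e1, e2, conj_mul_conj h2]
  rw [Matrix.trace_mul_cycle, ← Matrix.mul_assoc, h2, Matrix.one_mul]
  rw [diag_comm_trace]
  have hterm : ∀ j k : Fin d, (a j - a k) * (b k - b j) * (Mᴴ j k * M k j)
      = (a j - a k) * (b k - b j) * ↑(Complex.normSq (M k j)) := by
    intro j k
    rw [Matrix.conjTranspose_apply, RCLike.star_def, mul_comm ((starRingEnd ℂ) (M k j)),
      Complex.mul_conj]
  rw [Finset.sum_congr rfl fun j _ => Finset.sum_congr rfl fun k _ => hterm j k]
  have : -(1/2 : ℂ) * ∑ j, ∑ k, (a j - a k) * (b k - b j) * ↑(Complex.normSq (M k j))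
      = ↑(∑ j, ∑ k, (1/2) * ((hρ.eigenvalues j ^ α - hρ.eigenvalues k ^ α) *
          (hρ.eigenvalues j ^ (1-α) - hρ.eigenvalues k ^ (1-α))) *
          Complex.normSq (M k j)) := by
    rw [Finset.mul_sum]
    push_cast
    refine Finset.sum_congr rfl fun j _ => ?_
    rw [Finset.mul_sum]
    refine Finset.sum_congr rfl fun k _ => ?_
    simp only [ha, hb]
    ring
  rw [this, Complex.ofReal_re]

lemma wyd_nonneg (hpsd : ρ.PosSemidef) (hα0 : 0 ≤ α) (hα1 : α ≤ 1)
    (K : Matrix (Fin d) (Fin d) ℂ) : 0 ≤ wyd ρ α K := by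
  rw [wyd_eq hpsd.1 α K]
  refine Finset.sum_nonneg fun j _ => Finset.sum_nonneg fun k _ => ?_
  have he := hpsd.eigenvalues_nonneg
  have hc : 0 ≤ (hpsd.1.eigenvalues j ^ α - hpsd.1.eigenvalues k ^ α) *
      (hpsd.1.eigenvalues j ^ (1-α) - hpsd.1.eigenvalues k ^ (1-α)) := by
    rcases le_total (hpsd.1.eigenvalues j) (hpsd.1.eigenvalues k) with h | h
    · have u1 := sub_nonpos.mpr (Real.rpow_le_rpow (he j) h hα0)
      have u2 := sub_nonpos.mpr (Real.rpow_le_rpow (he j) h (sub_nonneg.mpr hα1))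
      nlinarith
    · exact mul_nonneg
        (sub_nonneg.mpr (Real.rpow_le_rpow (he k) h hα0))
        (sub_nonneg.mpr (Real.rpow_le_rpow (he k) h (by linarith)))
  have hn : (0:ℝ) ≤ Complex.normSq ((star (hpsd.1.eigenvectorUnitary : Matrix (Fin d) (Fin d) ℂ) * K *
        (hpsd.1.eigenvectorUnitary : Matrix (Fin d) (Fin d) ℂ)) k j) := Complex.normSq_nonneg _
  have h12 : (0:ℝ) ≤ 1/2 := by norm_num
  exact mul_nonneg (mul_nonneg h12 hc) hn

end master


lemma per_family {d N : ℕ} {ρ : Matrix (Fin d) (Fin d) ℂ} (hρ : ρ.IsHermitian) (α : ℝ)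
    (w : Fin N → Matrix (Fin d) (Fin d) ℂ) :
    (N : ℝ) * ∑ s, wyd ρ α (w s) = wyd ρ α (∑ s, w s)
      + ∑ p ∈ univ.filter (fun p : Fin N × Fin N => p.1 < p.2), wyd ρ α (w p.1 - w p.2) := by
  set V : Matrix (Fin d) (Fin d) ℂ := (hρ.eigenvectorUnitary : Matrix (Fin d) (Fin d) ℂ) with hV
  set C : Fin d → Fin d → ℝ := fun j k =>
    (1/2) * ((hρ.eigenvalues j ^ α - hρ.eigenvalues k ^ α) *
      (hρ.eigenvalues j ^ (1-α) - hρ.eigenvalues k ^ (1-α))) with hC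
  have main : ∀ j k : Fin d,
      (N : ℝ) * ∑ s, C j k * Complex.normSq ((star V * w s * V) k j)
        = C j k * Complex.normSq ((star V * (∑ s, w s) * V) k j)
          + ∑ p ∈ univ.filter (fun p : Fin N × Fin N => p.1 < p.2),
              C j k * Complex.normSq ((star V * (w p.1 - w p.2) * V) k j) := by
    intro j k
    have hsum : (star V * (∑ s, w s) * V) k j = ∑ s, (star V * w s * V) k j := by
      simp [Matrix.mul_sum, Matrix.sum_mul, Matrix.sum_apply]
    have hsub : ∀ x y : Fin N, (star V * (w x - w y) * V) k j
        = (star V * w x * V) k j - (star V * w y * V) k j := by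
      intro x y; simp [Matrix.mul_sub, Matrix.sub_mul, Matrix.sub_apply]
    simp only [hsum, hsub]
    have hs := scalar_id (fun s => (star V * w s * V) k j)
    simp only [← Finset.mul_sum]
    linear_combination (-(C j k)) * hs
  simp only [wyd_eq hρ α]
  rw [show ∑ s, ∑ j, ∑ k, C j k * Complex.normSq ((star V * w s * V) k j)
      = ∑ j, ∑ k, ∑ s, C j k * Complex.normSq ((star V * w s * V) k j) from by
    rw [Finset.sum_comm]; exact Finset.sum_congr rfl fun j _ => Finset.sum_comm]
  rw [show ∑ p ∈ univ.filter (fun p : Fin N × Fin N => p.1 < p.2), ∑ j, ∑ k,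
        C j k * Complex.normSq ((star V * (w p.1 - w p.2) * V) k j)
      = ∑ j, ∑ k, ∑ p ∈ univ.filter (fun p : Fin N × Fin N => p.1 < p.2),
        C j k * Complex.normSq ((star V * (w p.1 - w p.2) * V) k j) from by
    rw [Finset.sum_comm]; exact Finset.sum_congr rfl fun j _ => Finset.sum_comm]
  rw [Finset.mul_sum, ← Finset.sum_add_distrib]
  refine Finset.sum_congr rfl fun j _ => ?_
  rw [Finset.mul_sum, ← Finset.sum_add_distrib]
  exact Finset.sum_congr rfl fun k _ => main j k


theorem channel_uncertainty_LB2 (d n N : ℕ) (hN : 2 ≤ N)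
    (ρ : Matrix (Fin d) (Fin d) ℂ) (hρ : ρ.PosSemidef) (hTr : ρ.trace = 1)
    (α : ℝ) (hα0 : 0 < α) (hα1 : α < 1)
    (K : Fin N → Fin n → Matrix (Fin d) (Fin d) ℂ)
    (hK : ∀ s, ∑ i, (K s i)ᴴ * K s i = 1)
    (π : Fin N → Equiv.Perm (Fin n)) :
    ∑ s, ∑ i, wyd ρ α (K s i) ≥
      (1 / (N : ℝ)) *
        ((∑ i, wyd ρ α (∑ s, K s (π s i))) +
          (2 / ((N : ℝ) * ((N : ℝ) - 1))) *
            (∑ p ∈ univ.filter (fun p : Fin N × Fin N => p.1 < p.2),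
              Real.sqrt (∑ i, wyd ρ α (K p.1 (π p.1 i) - K p.2 (π p.2 i)))) ^ 2) := by
  have hN2 : (2:ℝ) ≤ (N:ℝ) := by exact_mod_cast hN
  have hNpos : (0:ℝ) < (N:ℝ) := by linarith
  have hN1 : (0:ℝ) < (N:ℝ) - 1 := by linarith
  set pairs := univ.filter (fun p : Fin N × Fin N => p.1 < p.2) with hpairs
  set D : Fin N × Fin N → ℝ :=
    fun p => ∑ i, wyd ρ α (K p.1 (π p.1 i) - K p.2 (π p.2 i)) with hD
  set T : ℝ := ∑ i, wyd ρ α (∑ s, K s (π s i)) with hT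
  set S : ℝ := ∑ s, ∑ i, wyd ρ α (K s i) with hS
  -- reindex by the permutations
  have hperm : S = ∑ s, ∑ i, wyd ρ α (K s (π s i)) := by
    rw [hS]
    exact Finset.sum_congr rfl fun s _ =>
      (Equiv.sum_comp (π s) (fun i => wyd ρ α (K s i))).symm
  -- key identity
  have key : (N : ℝ) * S = T + ∑ p ∈ pairs, D p := by
    rw [hperm, Finset.sum_comm, Finset.mul_sum]
    rw [Finset.sum_congr rfl fun i (_ : i ∈ univ) =>
      per_family hρ.1 α (fun s => K s (π s i))]
    rw [Finset.sum_add_distrib, Finset.sum_comm]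
  -- nonnegativity of the D's
  have hDnn : ∀ p : Fin N × Fin N, 0 ≤ D p := fun p =>
    Finset.sum_nonneg fun i _ => wyd_nonneg α hρ hα0.le hα1.le _
  -- Cauchy-Schwarz
  have hCS : (∑ p ∈ pairs, Real.sqrt (D p)) ^ 2 ≤ (pairs.card : ℝ) * ∑ p ∈ pairs, D p := by
    have h := Finset.sum_mul_sq_le_sq_mul_sq pairs (fun p => Real.sqrt (D p)) (fun _ => 1)
    simp only [mul_one, one_pow, Finset.sum_const, nsmul_eq_mul] at h
    calc (∑ p ∈ pairs, Real.sqrt (D p)) ^ 2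
        ≤ (∑ p ∈ pairs, Real.sqrt (D p) ^ 2) * (pairs.card : ℝ) := h
      _ = (pairs.card : ℝ) * ∑ p ∈ pairs, D p := by
          rw [Finset.sum_congr rfl fun p _ => Real.sq_sqrt (hDnn p)]
          ring
  have hcard : 2 * ((pairs.card : ℝ)) = (N : ℝ) * ((N : ℝ) - 1) := pair_card N
  have hX : (2 / ((N:ℝ) * ((N:ℝ) - 1))) * (∑ p ∈ pairs, Real.sqrt (D p)) ^ 2
      ≤ ∑ p ∈ pairs, D p := by
    have h1 : (2 / ((N:ℝ) * ((N:ℝ) - 1))) * (∑ p ∈ pairs, Real.sqrt (D p)) ^ 2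
        ≤ (2 / ((N:ℝ) * ((N:ℝ) - 1))) * ((pairs.card : ℝ) * ∑ p ∈ pairs, D p) := by
      apply mul_le_mul_of_nonneg_left hCS
      positivity
    have h2 : (2 / ((N:ℝ) * ((N:ℝ) - 1))) * ((pairs.card : ℝ) * ∑ p ∈ pairs, D p)
        = ∑ p ∈ pairs, D p := by
      rw [show (2 / ((N:ℝ) * ((N:ℝ) - 1))) * ((pairs.card : ℝ) * ∑ p ∈ pairs, D p)
          = (2 * (pairs.card : ℝ)) / ((N:ℝ) * ((N:ℝ) - 1)) * ∑ p ∈ pairs, D p from by ring]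
      rw [hcard, div_self (by positivity), one_mul]
    linarith
  rw [ge_iff_le, one_div, inv_mul_le_iff₀ hNpos]
  linarith [key, hX]
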